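/- arXiv:1808.07574 — 2 statements merged into one kernel-verified Lean document; each statement's English description precedes it below -/
import Mathlib

section
/- Let M be a real square Metzler matrix written in block form M = [[A, B],[C, D]] with A and D square and A invertible. Then M is Metzler stable (all eigenvalues have negative real part) if and only if A and D − C·A⁻¹·B are both Metzler stable. -/
/-- A Metzler matrix: all off-diagonal entries are nonnegative. -/
def IsMetzler {n : Type*} [Fintype n] [DecidableEq n] (M : Matrix n n ℝ) : Prop :=
  ∀ i j, i ≠ j → 0 ≤ M i j

/-- Metzler stability: all (complex) eigenvalues have negative real part. -/
def IsMetzlerStable {n : Type*} [Fintype n] [DecidableEq n] (M : Matrix n n ℝ) : Prop :=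
  IsMetzler M ∧ ∀ μ ∈ spectrum ℂ (M.map (algebraMap ℝ ℂ)), μ.re < 0


open Matrix Finset

namespace MzAux

variable {n : Type*} [Fintype n] [DecidableEq n]

/-- entrywise nonneg product -/
lemma mul_nonneg_entries {X Y : Matrix n n ℝ} (hX : ∀ i j, 0 ≤ X i j)
    (hY : ∀ i j, 0 ≤ Y i j) : ∀ i j, 0 ≤ (X * Y) i j := by
  intro i j
  rw [Matrix.mul_apply]
  exact Finset.sum_nonneg fun k _ => mul_nonneg (hX i k) (hY k j)

lemma pow_nonneg_entries {X : Matrix n n ℝ} (hX : ∀ i j, 0 ≤ X i j) :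
    ∀ N, ∀ i j, 0 ≤ (X ^ N) i j := by
  intro N
  induction N with
  | zero => intro i j; simp [Matrix.one_apply]; positivity
  | succ k ih => rw [pow_succ]; exact mul_nonneg_entries ih hX

section NormStuff

attribute [local instance] Matrix.linftyOpNormedRing Matrix.linftyOpNormedAlgebra

example : CompleteSpace (Matrix n n ℝ) := by infer_instance

lemma abs_entry_le_norm (X : Matrix n n ℝ) (i j : n) : |X i j| ≤ ‖X‖ := by
  have h1 : ‖X i j‖₊ ≤ ‖X‖₊ := by
    rw [Matrix.linfty_opNNNorm_def]
    refine le_trans ?_ (Finset.le_sup (Finset.mem_univ i))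
    exact Finset.single_le_sum (f := fun j => ‖X i j‖₊) (fun k _ => zero_le)
      (Finset.mem_univ j)
  simpa [← Real.norm_eq_abs] using (NNReal.coe_le_coe.mpr h1 : (‖X i j‖₊ : ℝ) ≤ ‖X‖₊)

/-- Neumann: if `0 ≤ X` entrywise and `‖X‖ < 1` then `1 - X` is invertible with
entrywise-nonnegative inverse. -/
lemma one_sub_inv_nonneg {X : Matrix n n ℝ} (hX : ∀ i j, 0 ≤ X i j) (hn : ‖X‖ < 1) :
    IsUnit (1 - X).det ∧ ∀ i j, 0 ≤ (1 - X)⁻¹ i j := by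
  have hu : IsUnit (1 - X) := ⟨Units.oneSub X hn, Units.val_oneSub X hn⟩
  have hdet : IsUnit (1 - X).det := (Matrix.isUnit_iff_isUnit_det _).mp hu
  refine ⟨hdet, ?_⟩
  set R := (1 - X)⁻¹ with hR
  have hkey : ∀ N : ℕ, R = (∑ k ∈ Finset.range N, X ^ k) + X ^ N * R := by
    intro N
    have h2 : (∑ k ∈ Finset.range N, X ^ k) * (X - 1) = X ^ N - 1 := geom_sum_mul X N
    have h1 : (∑ k ∈ Finset.range N, X ^ k) * (1 - X) = 1 - X ^ N := by
      rw [← neg_sub X 1, mul_neg, h2, neg_sub]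
    have h3 : (1 - X) * R = 1 := Matrix.mul_nonsing_inv _ hdet
    have h4 : (∑ k ∈ Finset.range N, X ^ k) = R - X ^ N * R := by
      calc (∑ k ∈ Finset.range N, X ^ k)
          = (∑ k ∈ Finset.range N, X ^ k) * ((1 - X) * R) := by rw [h3, mul_one]
        _ = ((∑ k ∈ Finset.range N, X ^ k) * (1 - X)) * R := by rw [mul_assoc]
        _ = (1 - X ^ N) * R := by rw [h1]
        _ = R - X ^ N * R := by rw [sub_mul, one_mul]
    rw [h4, sub_add_cancel]
  intro i j
  -- entrywise bound
  have hbound : ∀ N : ℕ, -(‖X‖ ^ (N+1) * ‖R‖) ≤ R i j := by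
    intro N
    have h := hkey (N+1)
    have hsum : 0 ≤ (∑ k ∈ Finset.range (N+1), X ^ k) i j := by
      rw [Matrix.sum_apply]
      exact Finset.sum_nonneg fun k _ => pow_nonneg_entries hX k i j
    have htail : |(X ^ (N+1) * R) i j| ≤ ‖X‖ ^ (N+1) * ‖R‖ := by
      refine (abs_entry_le_norm _ i j).trans ?_
      refine (norm_mul_le _ _).trans ?_
      exact mul_le_mul_of_nonneg_right (norm_pow_le' X (Nat.succ_pos N)) (norm_nonneg _)
    have hentry : R i j = (∑ k ∈ Finset.range (N+1), X ^ k) i j + (X ^ (N+1) * R) i j := by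
      nth_rewrite 1 [h]; rw [Matrix.add_apply]
    have hneg := neg_abs_le ((X ^ (N+1) * R) i j)
    linarith
  have hlim : Filter.Tendsto (fun N : ℕ => -(‖X‖ ^ (N+1) * ‖R‖)) Filter.atTop (nhds 0) := by
    have h0 : Filter.Tendsto (fun N : ℕ => ‖X‖ ^ N) Filter.atTop (nhds 0) :=
      tendsto_pow_atTop_nhds_zero_of_lt_one (norm_nonneg _) hn
    have h1 : Filter.Tendsto (fun N : ℕ => ‖X‖ ^ (N+1)) Filter.atTop (nhds 0) :=
      h0.comp (Filter.tendsto_add_atTop_nat 1)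
    simpa using (h1.mul_const ‖R‖).neg
  exact le_of_tendsto hlim (Filter.Eventually.of_forall hbound)

/-- the diagonal shift making `M + s•1` entrywise nonnegative -/
noncomputable def dshift (M : Matrix n n ℝ) : ℝ := ∑ i, |M i i|

lemma dshift_nonneg (M : Matrix n n ℝ) : 0 ≤ dshift M :=
  Finset.sum_nonneg fun i _ => abs_nonneg _

lemma shift_nonneg (M : Matrix n n ℝ) (hM : ∀ i j, i ≠ j → 0 ≤ M i j) :
    ∀ i j, 0 ≤ (M + dshift M • (1 : Matrix n n ℝ)) i j := by
  intro i j
  rcases eq_or_ne i j with rfl | hij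
  · have h1 : |M i i| ≤ dshift M :=
      Finset.single_le_sum (f := fun k => |M k k|) (fun k _ => abs_nonneg _) (Finset.mem_univ i)
    have := neg_abs_le (M i i)
    simp only [Matrix.add_apply, Matrix.smul_apply, Matrix.one_apply_eq, smul_eq_mul, mul_one]
    linarith
  · simpa [Matrix.add_apply, Matrix.smul_apply, Matrix.one_apply_ne hij] using hM i j hij

/-- Base case: resolvent is entrywise nonnegative for large `t`. -/
lemma resolvent_nonneg_of_large {M : Matrix n n ℝ} (hM : ∀ i j, i ≠ j → 0 ≤ M i j) :
    ∃ T : ℝ, ∀ t : ℝ, T ≤ t →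
      IsUnit (t • (1 : Matrix n n ℝ) - M).det ∧
      ∀ i j, 0 ≤ (t • (1 : Matrix n n ℝ) - M)⁻¹ i j := by
  set s := dshift M with hs
  set P := M + s • (1 : Matrix n n ℝ) with hPdef
  have hP : ∀ i j, 0 ≤ P i j := shift_nonneg M hM
  refine ⟨s + ‖P‖ + 1, fun t ht => ?_⟩
  have hs0 : 0 ≤ s := dshift_nonneg M
  have hc0 : (0:ℝ) < t + s := by
    have := norm_nonneg P; linarith
  set c := t + s with hc
  have hcne : c ≠ 0 := ne_of_gt hc0
  set X := c⁻¹ • P with hX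
  have hXn : ∀ i j, 0 ≤ X i j := by
    intro i j
    have : X i j = c⁻¹ * P i j := rfl
    rw [this]
    exact mul_nonneg (by positivity) (hP i j)
  have hXlt : ‖X‖ < 1 := by
    have h1 : ‖X‖ = |c⁻¹| * ‖P‖ := by
      rw [hX, norm_smul, Real.norm_eq_abs]
    rw [h1, abs_of_pos (by positivity)]
    rw [inv_mul_lt_iff₀ hc0, mul_one]
    have := norm_nonneg P
    simp only [hc]
    linarith
  obtain ⟨hdet1, hinv1⟩ := one_sub_inv_nonneg hXn hXlt
  have hfac : t • (1 : Matrix n n ℝ) - M = c • ((1 : Matrix n n ℝ) - X) := by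
    rw [smul_sub, hX, smul_smul, mul_inv_cancel₀ hcne, one_smul, hPdef]
    ext i j
    simp [Matrix.sub_apply, Matrix.add_apply, Matrix.smul_apply]
    ring
  have hright : (t • (1 : Matrix n n ℝ) - M) * (c⁻¹ • ((1 : Matrix n n ℝ) - X)⁻¹) = 1 := by
    rw [hfac, Matrix.smul_mul, Matrix.mul_smul, smul_smul, mul_inv_cancel₀ hcne, one_smul,
      Matrix.mul_nonsing_inv _ hdet1]
  constructor
  · have hdd := congrArg Matrix.det hright
    rw [Matrix.det_mul, Matrix.det_one] at hdd
    exact IsUnit.of_mul_eq_one _ hdd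
  · intro i j
    rw [Matrix.inv_eq_right_inv hright]
    have : (c⁻¹ • ((1 : Matrix n n ℝ) - X)⁻¹) i j = c⁻¹ * ((1 : Matrix n n ℝ) - X)⁻¹ i j := rfl
    rw [this]
    exact mul_nonneg (by positivity) (hinv1 i j)

/-- Step down: if the resolvent at `t₀` is nonnegative, it stays nonnegative slightly below. -/
lemma resolvent_step_down {M : Matrix n n ℝ} {t₀ : ℝ}
    (h0 : IsUnit (t₀ • (1 : Matrix n n ℝ) - M).det)
    (hR : ∀ i j, 0 ≤ (t₀ • (1 : Matrix n n ℝ) - M)⁻¹ i j) :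
    ∃ ε : ℝ, 0 < ε ∧ ∀ δ : ℝ, 0 ≤ δ → δ < ε →
      IsUnit ((t₀ - δ) • (1 : Matrix n n ℝ) - M).det ∧
      ∀ i j, 0 ≤ ((t₀ - δ) • (1 : Matrix n n ℝ) - M)⁻¹ i j := by
  set R₀ := (t₀ • (1 : Matrix n n ℝ) - M)⁻¹ with hR₀
  refine ⟨(‖R₀‖ + 1)⁻¹, by positivity, fun δ hδ0 hδ => ?_⟩
  set X := δ • R₀ with hX
  have hXn : ∀ i j, 0 ≤ X i j := fun i j => mul_nonneg hδ0 (hR i j)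
  have hXlt : ‖X‖ < 1 := by
    rw [hX, norm_smul, Real.norm_eq_abs, abs_of_nonneg hδ0]
    calc δ * ‖R₀‖ ≤ δ * (‖R₀‖ + 1) := by nlinarith [norm_nonneg R₀]
      _ < (‖R₀‖ + 1)⁻¹ * (‖R₀‖ + 1) := by
          apply mul_lt_mul_of_pos_right hδ (by positivity)
      _ = 1 := by field_simp
  obtain ⟨hdet1, hinv1⟩ := one_sub_inv_nonneg hXn hXlt
  have hmul0 : (t₀ • (1 : Matrix n n ℝ) - M) * R₀ = 1 := Matrix.mul_nonsing_inv _ h0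
  have hfac : (t₀ - δ) • (1 : Matrix n n ℝ) - M
      = (t₀ • (1 : Matrix n n ℝ) - M) * ((1 : Matrix n n ℝ) - X) := by
    rw [Matrix.mul_sub, mul_one, hX, Matrix.mul_smul, hmul0]
    ext i j
    simp [Matrix.sub_apply, Matrix.smul_apply, sub_smul]
    ring
  have hright : ((t₀ - δ) • (1 : Matrix n n ℝ) - M) * (((1 : Matrix n n ℝ) - X)⁻¹ * R₀) = 1 := by
    rw [hfac, mul_assoc, ← mul_assoc ((1 : Matrix n n ℝ) - X),
      Matrix.mul_nonsing_inv _ hdet1, one_mul, hmul0]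
  constructor
  · have hdd := congrArg Matrix.det hright
    rw [Matrix.det_mul, Matrix.det_one] at hdd
    exact IsUnit.of_mul_eq_one _ hdd
  · intro i j
    rw [Matrix.inv_eq_right_inv hright]
    exact mul_nonneg_entries hinv1 hR i j

end NormStuff

section Continuity

/-- limit of entrywise-nonnegative resolvents from the right -/
lemma resolvent_nonneg_limit {M : Matrix n n ℝ} {c : ℝ}
    (hc : IsUnit (c • (1 : Matrix n n ℝ) - M).det)
    (h : ∀ u : ℝ, c < u → ∀ i j, 0 ≤ (u • (1 : Matrix n n ℝ) - M)⁻¹ i j) :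
    ∀ i j, 0 ≤ (c • (1 : Matrix n n ℝ) - M)⁻¹ i j := by
  intro i j
  have hcont0 : Continuous fun u : ℝ => u • (1 : Matrix n n ℝ) - M := by
    apply Continuous.sub _ continuous_const
    exact continuous_id.smul continuous_const
  have hdetne : (c • (1 : Matrix n n ℝ) - M).det ≠ 0 := by
    intro h0
    rw [h0] at hc
    exact (by simpa using hc : False)
  have hinv : ContinuousAt Inv.inv (c • (1 : Matrix n n ℝ) - M) := by
    apply continuousAt_matrix_inv
    rw [Ring.inverse_eq_inv']
    exact continuousAt_inv₀ hdetne
  have hcont : ContinuousAt (fun u : ℝ => ((u • (1 : Matrix n n ℝ) - M)⁻¹) i j) c := by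
    have h1 : ContinuousAt (fun u : ℝ => (u • (1 : Matrix n n ℝ) - M)⁻¹) c :=
      ContinuousAt.comp (x := c) hinv hcont0.continuousAt
    have h2 : Continuous fun A : Matrix n n ℝ => A i j :=
      (continuous_apply j).comp (continuous_apply i)
    exact h2.continuousAt.comp h1
  have htend : Filter.Tendsto (fun u : ℝ => ((u • (1 : Matrix n n ℝ) - M)⁻¹) i j)
      (nhdsWithin c (Set.Ioi c)) (nhds (((c • (1 : Matrix n n ℝ) - M)⁻¹) i j)) :=
    hcont.continuousWithinAt
  refine ge_of_tendsto htend ?_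
  filter_upwards [self_mem_nhdsWithin] with u hu
  exact h u hu i j

end Continuity

section Spectral

/-- complexification of a real matrix -/
noncomputable def cx (M : Matrix n n ℝ) : Matrix n n ℂ := M.map (algebraMap ℝ ℂ)

lemma map_smul_one_sub (M : Matrix n n ℝ) (t : ℝ) :
    (t • (1 : Matrix n n ℝ) - M).map (algebraMap ℝ ℂ)
      = (t : ℂ) • (1 : Matrix n n ℂ) - cx M := by
  ext i j
  simp only [Matrix.map_apply, Matrix.sub_apply, Matrix.smul_apply, Matrix.one_apply, cx,
    smul_eq_mul, mul_ite, mul_one, mul_zero]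
  by_cases h : i = j <;> simp [h]

/-- If all eigenvalues have negative real part, `t•1 - M` is invertible for `t ≥ 0`. -/
lemma unit_shift {M : Matrix n n ℝ}
    (hH : ∀ μ ∈ spectrum ℂ (M.map (algebraMap ℝ ℂ)), μ.re < 0) :
    ∀ t : ℝ, 0 ≤ t → IsUnit (t • (1 : Matrix n n ℝ) - M).det := by
  intro t ht
  rw [isUnit_iff_ne_zero]
  intro h0
  have hdetC : ((t : ℂ) • (1 : Matrix n n ℂ) - cx M).det = 0 := by
    rw [← map_smul_one_sub, ← RingHom.mapMatrix_apply, ← RingHom.map_det, h0, map_zero]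
  have hmem : (t : ℂ) ∈ spectrum ℂ (M.map (algebraMap ℝ ℂ)) := by
    rw [spectrum.mem_iff]
    intro hu
    rw [Matrix.isUnit_iff_isUnit_det] at hu
    rw [Algebra.algebraMap_eq_smul_one] at hu
    rw [(show ((t:ℂ) • (1 : Matrix n n ℂ) - M.map (algebraMap ℝ ℂ)) = ((t : ℂ) • (1 : Matrix n n ℂ) - cx M) from rfl)] at hu
    rw [hdetC] at hu
    simpa using hu
  have := hH _ hmem
  rw [Complex.ofReal_re] at this
  linarith

/-- E2: A Hurwitz Metzler matrix has a nonpositive inverse. -/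
lemma hurwitz_inv_nonpos {M : Matrix n n ℝ} (hM : ∀ i j, i ≠ j → 0 ≤ M i j)
    (hH : ∀ μ ∈ spectrum ℂ (M.map (algebraMap ℝ ℂ)), μ.re < 0) :
    IsUnit M.det ∧ ∀ i j, M⁻¹ i j ≤ 0 := by
  obtain ⟨T, hT⟩ := resolvent_nonneg_of_large hM
  set Q : Set ℝ := {t | 0 ≤ t ∧ ∀ u : ℝ, t ≤ u → ∀ i j, 0 ≤ (u • (1 : Matrix n n ℝ) - M)⁻¹ i j}
    with hQ
  have hQne : (max T 0) ∈ Q := by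
    refine ⟨le_max_right _ _, fun u hu i j => ?_⟩
    exact (hT u ((le_max_left _ _).trans hu)).2 i j
  have hbdd : BddBelow Q := ⟨0, fun t ht => ht.1⟩
  set c := sInf Q with hc
  have hc0 : 0 ≤ c := le_csInf ⟨_, hQne⟩ fun t ht => ht.1
  have hgt : ∀ u : ℝ, c < u → ∀ i j, 0 ≤ (u • (1 : Matrix n n ℝ) - M)⁻¹ i j := by
    intro u hu i j
    obtain ⟨t, htQ, htu⟩ := exists_lt_of_csInf_lt ⟨_, hQne⟩ hu
    exact htQ.2 u htu.le i j
  have hcmem : ∀ i j, 0 ≤ (c • (1 : Matrix n n ℝ) - M)⁻¹ i j :=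
    resolvent_nonneg_limit (unit_shift hH c hc0) hgt
  have hczero : c = 0 := by
    by_contra hne
    have hcpos : 0 < c := lt_of_le_of_ne hc0 (Ne.symm hne)
    obtain ⟨ε, hε, hstep⟩ := resolvent_step_down (unit_shift hH c hc0) hcmem
    set δ := min (c / 2) (ε / 2) with hδ
    have hδpos : 0 < δ := lt_min (by linarith) (by linarith)
    have hmem : (c - δ) ∈ Q := by
      constructor
      · have : δ ≤ c / 2 := min_le_left _ _
        linarith
      · intro u hu i j
        rcases lt_or_ge c u with h | h
        · exact hgt u h i j
        rcases eq_or_lt_of_le h with rfl | hlt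
        · exact hcmem i j
        -- c - δ ≤ u < c : write u = c - δ' with 0 < δ' ≤ δ < ε
        have h1 := (hstep (c - u) (by linarith) (by
            have h2 : δ ≤ ε / 2 := min_le_right _ _
            have h3 : c - u ≤ δ := by linarith
            linarith)).2
        have : c - (c - u) = u := by ring
        rw [this] at h1
        exact h1 i j
    have := csInf_le hbdd hmem
    rw [← hc] at this
    linarith
  have h0 : ∀ i j, 0 ≤ (-M)⁻¹ i j := by
    have := hcmem
    rw [hczero] at this
    simpa using this
  have hdetneg : IsUnit (-M).det := by
    have := unit_shift hH 0 le_rfl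
    simpa using this
  have hdet : IsUnit M.det := by
    rw [Matrix.det_neg] at hdetneg
    rcases isUnit_iff_ne_zero.mp hdetneg with h
    rw [isUnit_iff_ne_zero]
    intro h0'
    rw [h0', mul_zero] at h
    exact h rfl
  refine ⟨hdet, fun i j => ?_⟩
  have hinv : M⁻¹ = -(-M)⁻¹ := by
    apply Matrix.inv_eq_right_inv
    rw [Matrix.mul_neg, ← Matrix.neg_mul]
    exact Matrix.mul_nonsing_inv _ hdetneg
  rw [hinv]
  simpa using neg_nonpos_of_nonneg (h0 i j)

end Spectral

section Good

/-- If `M` is Metzler, `x ≥ 0` and `M *ᵥ x < 0` entrywise, then `x > 0` entrywise. -/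
lemma witness_pos {M : Matrix n n ℝ} (hM : ∀ i j, i ≠ j → 0 ≤ M i j)
    {x : n → ℝ} (hx : ∀ i, 0 ≤ x i) (hMx : ∀ i, (M *ᵥ x) i < 0) :
    ∀ i, 0 < x i := by
  intro i
  rcases lt_or_eq_of_le (hx i) with h | h
  · exact h
  exfalso
  have h0 : 0 ≤ (M *ᵥ x) i := by
    rw [Matrix.mulVec, dotProduct]
    refine Finset.sum_nonneg fun j _ => ?_
    rcases eq_or_ne i j with rfl | hij
    · rw [← h, mul_zero]
    · exact mul_nonneg (hM i j hij) (hx j)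
  exact absurd (hMx i) (not_lt.mpr h0)

/-- E1: a Metzler matrix with a nonnegative vector mapped to a negative vector is Hurwitz. -/
lemma good_implies_hurwitz {M : Matrix n n ℝ} (hM : ∀ i j, i ≠ j → 0 ≤ M i j)
    {x : n → ℝ} (hx : ∀ i, 0 ≤ x i) (hMx : ∀ i, (M *ᵥ x) i < 0) :
    ∀ μ ∈ spectrum ℂ (M.map (algebraMap ℝ ℂ)), μ.re < 0 := by
  intro μ hμ
  by_contra hre
  push_neg at hre
  have hxpos := witness_pos hM hx hMx
  -- eigenvector
  have hnu : ¬ IsUnit (algebraMap ℂ (Matrix n n ℂ) μ - M.map (algebraMap ℝ ℂ)) :=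
    spectrum.mem_iff.mp hμ
  rw [Algebra.algebraMap_eq_smul_one] at hnu
  have hdet0 : (μ • (1 : Matrix n n ℂ) - M.map (algebraMap ℝ ℂ)).det = 0 := by
    by_contra hd
    exact hnu ((Matrix.isUnit_iff_isUnit_det _).mpr (isUnit_iff_ne_zero.mpr hd))
  obtain ⟨v, hv0, hv⟩ := (Matrix.exists_mulVec_eq_zero_iff).mpr hdet0
  have heig : (M.map (algebraMap ℝ ℂ)) *ᵥ v = μ • v := by
    have h1 := hv
    rw [Matrix.sub_mulVec, Matrix.smul_mulVec, Matrix.one_mulVec, sub_eq_zero] at h1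
    exact h1.symm
  set s := dshift M with hs
  have hs0 : 0 ≤ s := dshift_nonneg M
  set P := M + s • (1 : Matrix n n ℝ) with hPdef
  have hP : ∀ i j, 0 ≤ P i j := shift_nonneg M hM
  set u : n → ℝ := fun i => ‖v i‖ with hu
  -- key inequality
  have hkey : ∀ i, ‖μ + s‖ * u i ≤ ∑ j, P i j * u j := by
    intro i
    have h1 : (μ + s) * v i = ∑ j, ((P i j : ℝ) : ℂ) * v j := by
      have h2 : (∑ j, ((M i j : ℝ) : ℂ) * v j) = μ * v i := by
        have := congrFun heig i
        rw [Matrix.mulVec, dotProduct] at this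
        simpa [Matrix.map_apply, Algebra.algebraMap_self] using this
      have h3 : ∀ j, ((P i j : ℝ) : ℂ) = ((M i j : ℝ) : ℂ)
          + (if i = j then (s : ℂ) else 0) := by
        intro j
        rcases eq_or_ne i j with rfl | hij
        · simp [hPdef, Matrix.add_apply, Matrix.smul_apply, Matrix.one_apply_eq]
        · simp [hPdef, Matrix.add_apply, Matrix.smul_apply, Matrix.one_apply_ne hij, hij]
      calc (μ + s) * v i = μ * v i + (s : ℂ) * v i := by ring
        _ = (∑ j, ((M i j : ℝ) : ℂ) * v j) + ∑ j, (if i = j then (s : ℂ) else 0) * v j := by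
            rw [h2]
            congr 1
            simp [ite_mul]
        _ = ∑ j, (((M i j : ℝ) : ℂ) + (if i = j then (s : ℂ) else 0)) * v j := by
            rw [← Finset.sum_add_distrib]
            congr 1; ext j; ring
        _ = ∑ j, ((P i j : ℝ) : ℂ) * v j := by
            congr 1; ext j; rw [h3]
    have h4 : ‖(μ + s) * v i‖ ≤ ∑ j, P i j * u j := by
      rw [h1]
      refine (norm_sum_le _ _).trans ?_
      refine Finset.sum_le_sum fun j _ => ?_
      rw [norm_mul, Complex.norm_real, Real.norm_eq_abs, abs_of_nonneg (hP i j)]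
    rw [norm_mul] at h4
    exact h4
  -- pick index with maximal ratio
  obtain ⟨i₀, hi₀⟩ : ∃ i, u i ≠ 0 := by
    by_contra hall
    push_neg at hall
    exact hv0 (funext fun i => norm_eq_zero.mp (hall i))
  obtain ⟨i₁, -, hmax⟩ := Finset.exists_max_image Finset.univ (fun i => u i / x i)
    ⟨i₀, Finset.mem_univ i₀⟩
  set r := u i₁ / x i₁ with hr
  have hrpos : 0 < r := by
    have h5 : u i₀ / x i₀ ≤ r := hmax i₀ (Finset.mem_univ i₀)
    have h6 : 0 < u i₀ / x i₀ :=
      div_pos (lt_of_le_of_ne (norm_nonneg _) (Ne.symm hi₀)) (hxpos i₀)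
    linarith
  have hub : ∀ j, u j ≤ r * x j := fun j =>
    (div_le_iff₀ (hxpos j)).mp (hmax j (Finset.mem_univ j))
  have hui₁ : u i₁ = r * x i₁ := by
    rw [hr, div_mul_cancel₀]
    exact ne_of_gt (hxpos i₁)
  have hui₁pos : 0 < u i₁ := by
    rw [hui₁]; exact mul_pos hrpos (hxpos i₁)
  -- chain of inequalities at i₁
  have hPx : (P *ᵥ x) i₁ = (M *ᵥ x) i₁ + s * x i₁ := by
    rw [hPdef, Matrix.add_mulVec, Matrix.smul_mulVec, Matrix.one_mulVec]
    simp [Pi.add_apply]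
  have hchain : ‖μ + s‖ * u i₁ < s * u i₁ := by
    calc ‖μ + s‖ * u i₁ ≤ ∑ j, P i₁ j * u j := hkey i₁
      _ ≤ ∑ j, P i₁ j * (r * x j) :=
          Finset.sum_le_sum fun j _ => mul_le_mul_of_nonneg_left (hub j) (hP i₁ j)
      _ = r * (P *ᵥ x) i₁ := by
          rw [Matrix.mulVec, dotProduct, Finset.mul_sum]
          congr 1; ext j; ring
      _ = r * (M *ᵥ x) i₁ + s * (r * x i₁) := by rw [hPx]; ring
      _ < s * (r * x i₁) := by
          have := mul_pos hrpos (neg_pos.mpr (hMx i₁))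
          linarith
      _ = s * u i₁ := by rw [hui₁]
  have hlow : s * u i₁ ≤ ‖μ + s‖ * u i₁ := by
    refine mul_le_mul_of_nonneg_right ?_ (norm_nonneg _)
    calc s = ((μ : ℂ) + (s:ℂ)).re - μ.re := by simp
      _ ≤ ((μ : ℂ) + (s:ℂ)).re := by linarith
      _ ≤ ‖(μ : ℂ) + (s:ℂ)‖ := Complex.re_le_norm _
  exact absurd hchain (not_lt.mpr hlow)

/-- From a nonpositive inverse, build a positive witness. -/
lemma good_of_inv {M : Matrix n n ℝ} (hdet : IsUnit M.det)
    (hinv : ∀ i j, M⁻¹ i j ≤ 0) :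
    ∃ x : n → ℝ, (∀ i, 0 ≤ x i) ∧ ∀ i, (M *ᵥ x) i = -1 := by
  refine ⟨M⁻¹ *ᵥ (fun _ => (-1 : ℝ)), fun i => ?_, fun i => ?_⟩
  · rw [Matrix.mulVec, dotProduct]
    refine Finset.sum_nonneg fun j _ => ?_
    have := hinv i j
    nlinarith
  · rw [Matrix.mulVec_mulVec, Matrix.mul_nonsing_inv _ hdet, Matrix.one_mulVec]

end Good

section Rect

variable {l m o : Type*} [Fintype m]

lemma mulVec_nonneg {X : Matrix l m ℝ} {y : m → ℝ} (hX : ∀ i j, 0 ≤ X i j)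
    (hy : ∀ j, 0 ≤ y j) : ∀ i, 0 ≤ (X *ᵥ y) i := by
  intro i
  rw [Matrix.mulVec, dotProduct]
  exact Finset.sum_nonneg fun j _ => mul_nonneg (hX i j) (hy j)

lemma entries_mul_nonpos {X : Matrix l m ℝ} {Y : Matrix m o ℝ} (hX : ∀ i j, X i j ≤ 0)
    (hY : ∀ i j, 0 ≤ Y i j) : ∀ i j, (X * Y) i j ≤ 0 := by
  intro i j
  rw [Matrix.mul_apply]
  exact Finset.sum_nonpos fun k _ => mul_nonpos_of_nonpos_of_nonneg (hX i k) (hY k j)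

lemma entries_mul_nonpos' {X : Matrix l m ℝ} {Y : Matrix m o ℝ} (hX : ∀ i j, 0 ≤ X i j)
    (hY : ∀ i j, Y i j ≤ 0) : ∀ i j, (X * Y) i j ≤ 0 := by
  intro i j
  rw [Matrix.mul_apply]
  exact Finset.sum_nonpos fun k _ => mul_nonpos_of_nonneg_of_nonpos (hX i k) (hY k j)

lemma mulVec_nonpos_neg_one {X : Matrix l m ℝ} (hX : ∀ i j, X i j ≤ 0) :
    ∀ i, 0 ≤ (X *ᵥ (fun _ => (-1 : ℝ))) i := by
  intro i
  rw [Matrix.mulVec, dotProduct]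
  refine Finset.sum_nonneg fun j _ => ?_
  nlinarith [hX i j]

end Rect

end MzAux

open MzAux
theorem metzler_block_stability
    {n m : Type*} [Fintype n] [DecidableEq n] [Fintype m] [DecidableEq m]
    (A : Matrix n n ℝ) (B : Matrix n m ℝ) (C : Matrix m n ℝ) (D : Matrix m m ℝ)
    (hM : IsMetzler (Matrix.fromBlocks A B C D))
    (hA : IsUnit A.det) :
    IsMetzlerStable (Matrix.fromBlocks A B C D) ↔
      IsMetzlerStable A ∧ IsMetzlerStable (D - C * A⁻¹ * B) := by
  have hMz : ∀ (i j : n ⊕ m), i ≠ j → 0 ≤ Matrix.fromBlocks A B C D i j := hM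
  have hAz : ∀ i j, i ≠ j → 0 ≤ A i j := fun i j hij =>
    hMz (Sum.inl i) (Sum.inl j) (by simp [hij])
  have hBnn : ∀ i j, 0 ≤ B i j := fun i j =>
    hMz (Sum.inl i) (Sum.inr j) (by simp)
  have hCnn : ∀ i j, 0 ≤ C i j := fun i j =>
    hMz (Sum.inr i) (Sum.inl j) (by simp)
  have hDz : ∀ i j, i ≠ j → 0 ≤ D i j := fun i j hij =>
    hMz (Sum.inr i) (Sum.inr j) (by simp [hij])
  constructor
  · rintro ⟨-, hHur⟩
    obtain ⟨hdet, hinv⟩ := hurwitz_inv_nonpos hMz hHur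
    obtain ⟨w, hw0, hw⟩ := good_of_inv hdet hinv
    set x : n → ℝ := w ∘ Sum.inl with hxdef
    set y : m → ℝ := w ∘ Sum.inr with hydef
    have hblock := Matrix.fromBlocks_mulVec A B C D w
    have ha : ∀ i, (A *ᵥ x + B *ᵥ y) i = -1 := by
      intro i
      have h1 := hw (Sum.inl i)
      rw [hblock] at h1
      simpa using h1
    have hb : ∀ i, (C *ᵥ x + D *ᵥ y) i = -1 := by
      intro i
      have h1 := hw (Sum.inr i)
      rw [hblock] at h1
      simpa using h1
    have hx0 : ∀ i, 0 ≤ x i := fun i => hw0 (Sum.inl i)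
    have hy0 : ∀ i, 0 ≤ y i := fun i => hw0 (Sum.inr i)
    have hBy : ∀ i, 0 ≤ (B *ᵥ y) i := mulVec_nonneg hBnn hy0
    have hAx : ∀ i, (A *ᵥ x) i < 0 := by
      intro i
      have h1 := ha i
      rw [Pi.add_apply] at h1
      have := hBy i
      linarith
    have hAspec := good_implies_hurwitz hAz hx0 hAx
    have hAinv := (hurwitz_inv_nonpos hAz hAspec).2
    have hCAB : ∀ i j, (C * A⁻¹ * B) i j ≤ 0 := by
      have h1 : ∀ i j, (C * A⁻¹) i j ≤ 0 := entries_mul_nonpos' hCnn hAinv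
      exact entries_mul_nonpos h1 hBnn
    have hSz : ∀ i j, i ≠ j → 0 ≤ (D - C * A⁻¹ * B) i j := by
      intro i j hij
      have h1 := hCAB i j
      have h2 := hDz i j hij
      simp only [Matrix.sub_apply]
      linarith
    -- S *ᵥ y
    have hSid : (D - C * A⁻¹ * B) *ᵥ y
        = (C *ᵥ x + D *ᵥ y) - (C * A⁻¹) *ᵥ (A *ᵥ x + B *ᵥ y) := by
      rw [Matrix.mulVec_add, Matrix.mulVec_mulVec, Matrix.mulVec_mulVec,
        Matrix.mul_assoc C A⁻¹ A, Matrix.nonsing_inv_mul _ hA, Matrix.mul_one,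
        Matrix.sub_mulVec]
      abel
    have hSy : ∀ i, ((D - C * A⁻¹ * B) *ᵥ y) i < 0 := by
      intro i
      rw [hSid]
      have hvec : (A *ᵥ x + B *ᵥ y) = fun _ => (-1 : ℝ) := funext ha
      rw [hvec]
      have h1 : 0 ≤ ((C * A⁻¹) *ᵥ (fun _ => (-1:ℝ))) i :=
        mulVec_nonpos_neg_one (entries_mul_nonpos' hCnn hAinv) i
      have h2 := hb i
      simp only [Pi.sub_apply]
      rw [h2]
      linarith
    exact ⟨⟨hAz, hAspec⟩, ⟨hSz, good_implies_hurwitz hSz hy0 hSy⟩⟩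
  · rintro ⟨⟨hAz', hAspec⟩, ⟨hSz, hSspec⟩⟩
    have hAinv := (hurwitz_inv_nonpos hAz' hAspec).2
    obtain ⟨x, hx0, hxeq⟩ := good_of_inv hA hAinv
    obtain ⟨hSdet, hSinv⟩ := hurwitz_inv_nonpos hSz hSspec
    obtain ⟨y, hy0, hyeq⟩ := good_of_inv hSdet hSinv
    have hAB : ∀ i j, (A⁻¹ * B) i j ≤ 0 := entries_mul_nonpos hAinv hBnn
    set z : n → ℝ := (-(A⁻¹ * B)) *ᵥ y with hzdef
    have hz0 : ∀ i, 0 ≤ z i := by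
      refine mulVec_nonneg (fun i j => ?_) hy0
      have := hAB i j
      simp only [Matrix.neg_apply]
      linarith
    set csum : ℝ := ∑ i, |(C *ᵥ x) i| with hcsum
    have hcs0 : 0 ≤ csum := Finset.sum_nonneg fun i _ => abs_nonneg _
    have hcb : ∀ i, (C *ᵥ x) i ≤ csum := by
      intro i
      refine (le_abs_self _).trans ?_
      exact Finset.single_le_sum (f := fun i => |(C *ᵥ x) i|) (fun k _ => abs_nonneg _)
        (Finset.mem_univ i)
    set t : ℝ := (csum + 1)⁻¹ with ht
    have htpos : 0 < t := by positivity
    set u : n → ℝ := t • x + z with hudef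
    have hu0 : ∀ i, 0 ≤ u i := fun i =>
      add_nonneg (mul_nonneg htpos.le (hx0 i)) (hz0 i)
    set w : n ⊕ m → ℝ := Sum.elim u y with hwdef
    have hw0 : ∀ k, 0 ≤ w k := by
      intro k
      cases k with
      | inl i => exact hu0 i
      | inr i => exact hy0 i
    -- compute blocks
    have hAz2 : A *ᵥ z = -(B *ᵥ y) := by
      rw [hzdef, Matrix.mulVec_mulVec, Matrix.mul_neg, ← Matrix.mul_assoc,
        Matrix.mul_nonsing_inv _ hA, Matrix.one_mul, Matrix.neg_mulVec]
    have hCz : C *ᵥ z = -((C * A⁻¹ * B) *ᵥ y) := by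
      rw [hzdef, Matrix.mulVec_mulVec, Matrix.mul_neg, ← Matrix.mul_assoc, Matrix.neg_mulVec]
    have hcomp1 : A *ᵥ u + B *ᵥ y = t • (A *ᵥ x) := by
      rw [hudef, Matrix.mulVec_add, Matrix.mulVec_smul, hAz2]
      abel
    have hcomp2 : C *ᵥ u + D *ᵥ y = t • (C *ᵥ x) + (D - C * A⁻¹ * B) *ᵥ y := by
      rw [hudef, Matrix.mulVec_add, Matrix.mulVec_smul, hCz, Matrix.sub_mulVec]
      abel
    have hMw : ∀ k, ((Matrix.fromBlocks A B C D) *ᵥ w) k < 0 := by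
      intro k
      rw [Matrix.fromBlocks_mulVec]
      have hwl : w ∘ Sum.inl = u := by funext i; rfl
      have hwr : w ∘ Sum.inr = y := by funext i; rfl
      rw [hwl, hwr]
      cases k with
      | inl i =>
        have h1 : (A *ᵥ u + B *ᵥ y) i = t * (A *ᵥ x) i := by rw [hcomp1]; rfl
        simp only [Sum.elim_inl]
        rw [h1, hxeq i]
        nlinarith
      | inr i =>
        have h1 : (C *ᵥ u + D *ᵥ y) i = t * (C *ᵥ x) i + ((D - C * A⁻¹ * B) *ᵥ y) i := by
          rw [hcomp2]; rfl
        simp only [Sum.elim_inr]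
        rw [h1, hyeq i]
        have h2 : t * (C *ᵥ x) i ≤ t * csum := mul_le_mul_of_nonneg_left (hcb i) htpos.le
        have h3 : t * csum < 1 := by
          rw [ht, inv_mul_lt_iff₀ (by positivity : (0:ℝ) < csum + 1)]
          linarith
        linarith
    exact ⟨hM, good_implies_hurwitz hMz hw0 hMw⟩
end

section
/- Let 0 < f_q f_r < 1, ϖ, δ, Γ, H, a > 0, ℓ ∈ ℕ, n ∈ ℕ, and positive constants α_i, m_i, ν_i, γ_i (0 ≤ i ≤ n). Define s := (ϖ/a)·(1 − f_q f_r)/(f_q (f_q f_r)^ℓ)·(H/Γ) and R₀ via (1/R₀)·Σᵢ αᵢmᵢ/(νᵢ+γᵢ) = s·((1−f_q f_r)/(f_q f_r))·(ϖ/a). If R₀ > 1, then the function T(x) := Σᵢ (αᵢmᵢ/(νᵢ+γᵢ))·( 1/(R₀(1 − s x)) − (νᵢ+γᵢ)/(νᵢ+γᵢ+mᵢ x) ) has exactly one root in the open interval (0, 1/s). -/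
set_option maxHeartbeats 1000000 in
theorem endemic_equation_unique_root
    (fq fr ϖ δ Γ H a : ℝ) (ℓ n : ℕ)
    (α m ν γ : Fin (n + 1) → ℝ)
    (hfq : 0 < fq) (hfr : 0 < fr) (hprod : fq * fr < 1)
    (hϖ : 0 < ϖ) (hδ : 0 < δ) (hΓ : 0 < Γ) (hH : 0 < H) (ha : 0 < a)
    (hα : ∀ i, 0 < α i) (hm : ∀ i, 0 < m i) (hν : ∀ i, 0 < ν i) (hγ : ∀ i, 0 < γ i)
    (s R₀ : ℝ)
    (hs : s = (ϖ / a) * ((1 - fq * fr) / (fq * (fq * fr) ^ ℓ)) * (H / Γ))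
    (hR₀pos : 0 < R₀)
    (hR₀def : (1 / R₀) * ∑ i, α i * m i / (ν i + γ i) =
      s * ((1 - fq * fr) / (fq * fr)) * (ϖ / a))
    (hR₀ : 1 < R₀) :
    ∃! x : ℝ, x ∈ Set.Ioo 0 (1 / s) ∧
      ∑ i, (α i * m i / (ν i + γ i)) *
        (1 / (R₀ * (1 - s * x)) - (ν i + γ i) / (ν i + γ i + m i * x)) = 0 := by
  set T : ℝ → ℝ := fun x => ∑ i, (α i * m i / (ν i + γ i)) *
      (1 / (R₀ * (1 - s * x)) - (ν i + γ i) / (ν i + γ i + m i * x)) with hT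
  have hs0 : 0 < s := by
    rw [hs]
    have h1 : 0 < 1 - fq * fr := by linarith
    positivity
  have hc : ∀ i, 0 < α i * m i / (ν i + γ i) := fun i => by
    have := hα i; have := hm i; have := hν i; have := hγ i; positivity
  have hd : ∀ i, 0 < ν i + γ i := fun i => by have := hν i; have := hγ i; linarith
  -- strict monotonicity on Ico 0 (1/s)
  have hmono : ∀ x y, x ∈ Set.Ico 0 (1 / s) → y ∈ Set.Ico 0 (1 / s) → x < y → T x < T y := by
    intro x y hx hy hxy
    apply Finset.sum_lt_sum_of_nonempty Finset.univ_nonempty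
    intro i _
    apply mul_lt_mul_of_pos_left _ (hc i)
    have hysp : s * y < 1 := by
      have := hy.2
      calc s * y < s * (1 / s) := by exact mul_lt_mul_of_pos_left this hs0
        _ = 1 := by field_simp
    have hxsp : s * x < 1 := lt_of_le_of_lt (by nlinarith [hx.1, hy.2]) hysp
    have hsxy : s * x < s * y := mul_lt_mul_of_pos_left hxy hs0
    have h1 : 1 / (R₀ * (1 - s * x)) < 1 / (R₀ * (1 - s * y)) := by
      apply one_div_lt_one_div_of_lt
      · nlinarith
      · nlinarith
    have h2 : (ν i + γ i) / (ν i + γ i + m i * y) < (ν i + γ i) / (ν i + γ i + m i * x) := by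
      apply div_lt_div_of_pos_left (hd i)
      · nlinarith [hm i, hd i, hx.1]
      · nlinarith [hm i, hx.1]
    linarith
  -- the point x₀ where T > 0
  set x₀ : ℝ := (1 - 1 / (2 * R₀)) / s with hx₀
  have hhalf : 0 < 1 / (2 * R₀) := by positivity
  have hhalf1 : 1 / (2 * R₀) < 1 := by
    rw [div_lt_one (by linarith)]; linarith
  have hx₀pos : 0 < x₀ := by
    apply div_pos (by linarith) hs0
  have hx₀lt : x₀ < 1 / s := by
    rw [hx₀]
    gcongr
    linarith
  have hsx₀ : s * x₀ = 1 - 1 / (2 * R₀) := by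
    rw [hx₀]; field_simp
  have hT0 : T 0 < 0 := by
    have : T 0 = ∑ i, (α i * m i / (ν i + γ i)) * (1 / R₀ - 1) := by
      apply Finset.sum_congr rfl
      intro i _
      have hdi := (hd i).ne'
      congr 1
      rw [mul_zero, sub_zero, mul_one, mul_zero, add_zero, div_self hdi]
    rw [this]
    apply Finset.sum_neg ?_ Finset.univ_nonempty
    intro i _
    have hR : 1 / R₀ - 1 < 0 := by
      have : 1 / R₀ < 1 := by rw [div_lt_one hR₀pos]; exact hR₀
      linarith
    exact mul_neg_of_pos_of_neg (hc i) hR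
  have hTx₀ : 0 < T x₀ := by
    apply Finset.sum_pos ?_ Finset.univ_nonempty
    intro i _
    apply mul_pos (hc i)
    have h1 : 1 / (R₀ * (1 - s * x₀)) = 2 := by
      rw [hsx₀]
      have : R₀ * (1 - (1 - 1 / (2 * R₀))) = 1 / 2 := by field_simp; ring
      rw [this]; norm_num
    have h2 : (ν i + γ i) / (ν i + γ i + m i * x₀) < 1 := by
      rw [div_lt_one (by nlinarith [hm i, hd i])]
      nlinarith [hm i]
    rw [h1]; linarith
  -- continuity on Icc 0 x₀
  have hcont : ContinuousOn T (Set.Icc 0 x₀) := by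
    apply continuousOn_finset_sum
    intro i _
    apply ContinuousOn.mul continuousOn_const
    apply ContinuousOn.sub
    · apply ContinuousOn.div continuousOn_const
      · exact (continuous_const.mul (continuous_const.sub
          (continuous_const.mul continuous_id))).continuousOn
      · intro x hx
        have hxle : s * x ≤ s * x₀ := mul_le_mul_of_nonneg_left hx.2 hs0.le
        have : s * x < 1 := by rw [hsx₀] at hxle; linarith
        have : 0 < R₀ * (1 - s * x) := by nlinarith
        exact this.ne'
    · apply ContinuousOn.div continuousOn_const
      · exact (continuous_const.add (continuous_const.mul continuous_id)).continuousOn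
      · intro x hx
        have : 0 < ν i + γ i + m i * x := by nlinarith [hm i, hd i, hx.1]
        exact this.ne'
  -- existence via IVT
  have hsub : Set.Ioo (T 0) (T x₀) ⊆ T '' Set.Ioo 0 x₀ :=
    intermediate_value_Ioo hx₀pos.le hcont
  obtain ⟨x, hxmem, hxval⟩ := hsub ⟨hT0, hTx₀⟩
  refine ⟨x, ⟨⟨hxmem.1, hxmem.2.trans hx₀lt⟩, hxval⟩, ?_⟩
  rintro y ⟨hymem, hyval⟩
  have hxIco : x ∈ Set.Ico 0 (1 / s) := ⟨hxmem.1.le, hxmem.2.trans hx₀lt⟩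
  have hyIco : y ∈ Set.Ico 0 (1 / s) := ⟨hymem.1.le, hymem.2⟩
  rcases lt_trichotomy y x with h | h | h
  · exact absurd (hyval.symm.trans_lt ((hmono y x hyIco hxIco h).trans_eq hxval)).false id
  · exact h
  · exact absurd (hxval.symm.trans_lt ((hmono x y hxIco hyIco h).trans_eq hyval)).false id
end
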